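/- Let M ∈ ℂ with M ≠ 0 and y ∈ ℂ, set P = [[M, 1], [0, M⁻¹]], Q = [[M, 0], [2−y, M⁻¹]], and x = M + M⁻¹. Let W = (QP⁻¹)^m (QP) (Q⁻¹P)^m for an integer m. Then W₁₁ + (M⁻¹ − M)·W₁₂ = 1 + (y+2−x²)·S_{m−1}(y)·(S_m(y) − S_{m−1}(y)), where W₁₁ and W₁₂ are the (1,1)- and (1,2)-entries of W. -/

import Mathlib

open Polynomial

/-- Integer-indexed Chebyshev-like polynomials: `S 0 = 1`, `S 1 = X`,
and `S (l+1) = X * S l - S (l-1)` for all `l : ℤ`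
(equivalently `S l = U_l (v/2)` for the Chebyshev polynomials `U` of the second kind). -/
@[semireducible] noncomputable def chebS (R : Type*) [CommRing R] : ℤ → R[X]
  | 0 => 1
  | 1 => X
  | (n : ℕ) + 2 => X * chebS R (n + 1) - chebS R n
  | -((n : ℕ) + 1) => X * chebS R (-n) - chebS R (-n + 1)
  termination_by n => Int.natAbs n + Int.natAbs (n - 1)




lemma chebS_neg_one : chebS ℂ (-1) = 0 := by
  have h4 := chebS.eq_4 ℂ 0
  rw [show (Int.negSucc 0) = (-1:ℤ) from rfl] at h4
  norm_num [chebS.eq_1, chebS.eq_2] at h4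
  exact h4

lemma chebS_rec (l : ℤ) : chebS ℂ (l + 1) = X * chebS ℂ l - chebS ℂ (l - 1) := by
  rcases l with n | n
  · rcases n with _ | n
    · rw [show (Int.ofNat 0 + 1 : ℤ) = 1 from rfl, show (Int.ofNat 0 : ℤ) = 0 from rfl,
        show ((0:ℤ) - 1) = -1 from rfl, chebS.eq_1, chebS.eq_2, chebS_neg_one]
      ring
    · have h3 := chebS.eq_3 ℂ n
      rw [show (Int.ofNat (n+1) + 1 : ℤ) = Int.ofNat n.succ.succ by simp,
        show (Int.ofNat (n+1) : ℤ) = (n:ℤ) + 1 by simp,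
        show ((n:ℤ) + 1 - 1 : ℤ) = (n:ℤ) by ring, h3]
  · have h4 := chebS.eq_4 ℂ n
    have h4' := chebS.eq_4 ℂ (n+1)
    rw [Int.negSucc_eq] at h4 h4' ⊢
    rw [show (-((n:ℤ)+1) + 1) = -(n:ℤ) by ring,
      show (-((n:ℤ)+1) - 1) = -((((n:ℕ)+1:ℕ)):ℤ)-1 by push_cast; ring,
      show (-((((n:ℕ)+1:ℕ)):ℤ)-1) = -(((((n:ℕ)+1:ℕ)):ℤ)+1) by ring, h4',
      show (-((((n:ℕ)+1:ℕ)):ℤ)) = -((n:ℤ)+1) by push_cast; ring,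
      show (-((n:ℤ)+1) + 1) = -(n:ℤ) by ring]
    ring

lemma chebS_neg_two : chebS ℂ (-2) = -1 := by
  have := chebS_rec (-1)
  norm_num [chebS_neg_one, chebS.eq_1] at this
  linear_combination this

lemma sRec (y : ℂ) (l : ℤ) :
    (chebS ℂ (l + 1)).eval y = y * (chebS ℂ l).eval y - (chebS ℂ (l - 1)).eval y := by
  rw [chebS_rec]; simp

lemma sDet (y : ℂ) (l : ℤ) :
    (chebS ℂ l).eval y ^ 2 - y * (chebS ℂ l).eval y * (chebS ℂ (l - 1)).eval y
      + (chebS ℂ (l - 1)).eval y ^ 2 = 1 := by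
  induction l using Int.induction_on with
  | zero => norm_num [chebS.eq_1, chebS_neg_one]
  | succ n ih =>
    have hr := sRec y n
    rw [show ((n:ℤ) + 1 - 1) = (n:ℤ) by ring, hr]
    linear_combination ih
  | pred n ih =>
    have hr := sRec y (-(n:ℤ) - 1)
    rw [show (-(n:ℤ) - 1 + 1) = -(n:ℤ) by ring] at hr
    rw [show (-(n:ℤ) - 1 - 1) = (-(n:ℤ) - 1) - 1 by ring]
    rw [hr] at ih
    linear_combination ih

lemma matPow (y : ℂ) (A : Matrix (Fin 2) (Fin 2) ℂ) (h : A * A + 1 = y • A) (m : ℤ) :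
    A ^ m = (chebS ℂ (m - 1)).eval y • A - (chebS ℂ (m - 2)).eval y • 1 := by
  have hA2 : A * A = y • A - 1 := by rw [← h]; abel
  have hinv : A * (y • (1 : Matrix (Fin 2) (Fin 2) ℂ) - A) = 1 := by
    rw [mul_sub, mul_smul_comm, mul_one, hA2]; abel
  have hdet : IsUnit A.det := by
    apply IsUnit.of_mul_eq_one (y • (1 : Matrix (Fin 2) (Fin 2) ℂ) - A).det
    rw [← Matrix.det_mul, hinv, Matrix.det_one]
  have hAinv : A⁻¹ = y • (1 : Matrix (Fin 2) (Fin 2) ℂ) - A := Matrix.inv_eq_right_inv hinv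
  induction m using Int.induction_on with
  | zero =>
    rw [zpow_zero]
    rw [show ((0:ℤ) - 1) = -1 by ring, show ((0:ℤ) - 2) = -2 by ring,
      chebS_neg_one, chebS_neg_two]
    simp
  | succ n ih =>
    rw [Matrix.zpow_add_one hdet, ih]
    have hr := sRec y ((n:ℤ) - 1)
    rw [show ((n:ℤ) - 1 + 1) = (n:ℤ) by ring, show ((n:ℤ) - 1 - 1) = (n:ℤ) - 2 by ring] at hr
    rw [show ((n:ℤ) + 1 - 1) = (n:ℤ) by ring, show ((n:ℤ) + 1 - 2) = (n:ℤ) - 1 by ring, hr]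
    rw [sub_mul, Matrix.smul_mul, Matrix.smul_mul, one_mul, hA2]
    module
  | pred n ih =>
    rw [Matrix.zpow_sub_one hdet, ih, hAinv]
    have hr := sRec y (-(n:ℤ) - 2)
    rw [show (-(n:ℤ) - 2 + 1) = -(n:ℤ) - 1 by ring, show (-(n:ℤ) - 2 - 1) = -(n:ℤ) - 3 by ring] at hr
    have h3 : (chebS ℂ (-(n:ℤ) - 3)).eval y
        = y * (chebS ℂ (-(n:ℤ) - 2)).eval y - (chebS ℂ (-(n:ℤ) - 1)).eval y := by
      linear_combination hr
    rw [show (-(n:ℤ) - 1 - 1) = -(n:ℤ) - 2 by ring, show (-(n:ℤ) - 1 - 2) = -(n:ℤ) - 3 by ring]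
    rw [h3, sub_mul, Matrix.smul_mul, Matrix.smul_mul, one_mul, mul_sub, mul_smul_comm,
      mul_one, hA2]
    module

set_option maxHeartbeats 1000000 in
/-- For `W = (QP⁻¹)^m (QP) (Q⁻¹P)^m` with `P = [[M,1],[0,M⁻¹]]`, `Q = [[M,0],[2-y,M⁻¹]]` and
`x = M + M⁻¹`, one has `W₁₁ + (M⁻¹ - M)·W₁₂ = 1 + (y+2-x²)·S_{m-1}(y)·(S_m(y) - S_{m-1}(y))`. -/
theorem odd_word_Riley_factor (M y : ℂ) (hM : M ≠ 0) (m : ℤ)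
    (W : Matrix (Fin 2) (Fin 2) ℂ)
    (hW : W = (!![M, 0; 2 - y, M⁻¹] * (!![M, 1; 0, M⁻¹])⁻¹) ^ m
        * (!![M, 0; 2 - y, M⁻¹] * !![M, 1; 0, M⁻¹])
        * ((!![M, 0; 2 - y, M⁻¹])⁻¹ * !![M, 1; 0, M⁻¹]) ^ m) :
    W 0 0 + (M⁻¹ - M) * W 0 1
      = 1 + (y + 2 - (M + M⁻¹)^2) * (chebS ℂ (m - 1)).eval y
            * ((chebS ℂ m).eval y - (chebS ℂ (m - 1)).eval y) := by
  have hPinv : (!![M, 1; 0, M⁻¹])⁻¹ = !![M⁻¹, -1; 0, M] := by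
    apply Matrix.inv_eq_right_inv
    ext i j
    fin_cases i <;> fin_cases j <;>
      (simp [Matrix.mul_apply, Fin.sum_univ_two]; try field_simp)
  have hQinv : (!![M, 0; 2 - y, M⁻¹])⁻¹ = !![M⁻¹, 0; y - 2, M] := by
    apply Matrix.inv_eq_right_inv
    ext i j
    fin_cases i <;> fin_cases j <;>
      (simp [Matrix.mul_apply, Fin.sum_univ_two]; (try field_simp); (try ring))
  have hA : !![M, 0; 2 - y, M⁻¹] * !![M⁻¹, -1; 0, M] = !![1, -M; (2-y)*M⁻¹, y-1] := by
    ext i j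
    fin_cases i <;> fin_cases j <;>
      (simp [Matrix.mul_apply, Fin.sum_univ_two]; (try field_simp); (try ring))
  have hB : !![M⁻¹, 0; y - 2, M] * !![M, 1; 0, M⁻¹] = !![1, M⁻¹; (y-2)*M, y-1] := by
    ext i j
    fin_cases i <;> fin_cases j <;>
      (simp [Matrix.mul_apply, Fin.sum_univ_two]; (try field_simp); (try ring))
  have hAeq : !![1, -M; (2-y)*M⁻¹, y-1] * !![1, -M; (2-y)*M⁻¹, y-1] + 1
      = y • !![1, -M; (2-y)*M⁻¹, y-1] := by
    ext i j
    fin_cases i <;> fin_cases j <;>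
      (simp [Matrix.mul_apply, Fin.sum_univ_two, Matrix.one_apply]; (try field_simp); (try ring))
  have hBeq : !![1, M⁻¹; (y-2)*M, y-1] * !![1, M⁻¹; (y-2)*M, y-1] + 1
      = y • !![1, M⁻¹; (y-2)*M, y-1] := by
    ext i j
    fin_cases i <;> fin_cases j <;>
      (simp [Matrix.mul_apply, Fin.sum_univ_two, Matrix.one_apply]; (try field_simp); (try ring))
  rw [hW, hPinv, hQinv, hA, hB, matPow y _ hAeq m, matPow y _ hBeq m]
  have hsm := sRec y (m - 1)
  rw [show (m - 1 + 1) = m by ring, show (m - 1 - 1) = m - 2 by ring] at hsm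
  have hdet := sDet y (m - 1)
  rw [show (m - 1 - 1) = m - 2 by ring] at hdet
  set a := (chebS ℂ (m - 1)).eval y with ha
  set b := (chebS ℂ (m - 2)).eval y with hb
  rw [hsm]
  rw [Matrix.one_fin_two]
  simp only [Matrix.smul_apply, Matrix.smul_cons, Matrix.smul_empty, smul_eq_mul, mul_one,
    mul_zero, Matrix.sub_apply, Matrix.mul_apply, Fin.sum_univ_two,
    Matrix.cons_val', Matrix.cons_val_zero, Matrix.cons_val_one, Matrix.head_cons,
    Matrix.empty_val', Matrix.cons_val_fin_one, Matrix.head_fin_const]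
  simp only [Matrix.of_apply, Matrix.cons_val', Matrix.cons_val_zero, Matrix.cons_val_one,
    Matrix.head_cons, Matrix.empty_val', Matrix.cons_val_fin_one, Matrix.head_fin_const]
  set N := M⁻¹ with hN
  have hMN : M * N = 1 := by rw [hN]; exact mul_inv_cancel₀ hM
  linear_combination (M*N*y*a^2 - 2*M*N*a*b - a^2 - 2*y*a*b + b^2 + y^2*a^2
    - N^2*y*a^2 + N^2*a^2 + N^2*a*b + M^2*a^2 + M^2*a*b - M^2*y*a^2 + y*a^2 - 2*a*b) * hMN
    + hdet
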